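/- Let k be a field of characteristic 0 and let B be a commutative k-algebra that is an integral domain. Let t_1, …, t_s ∈ B be such that every element of B is algebraic over the k-subalgebra of B generated by t_1, …, t_s, let D_1, …, D_s be k-linear derivations of B with D_i(t_j) = δ_{ij}, and let φ : B → k be a k-algebra homomorphism. Then for every nonzero f ∈ B there exists a finite (possibly empty) composition D = D_{i_1} ∘ D_{i_2} ∘ ⋯ ∘ D_{i_r} of derivations from the set {D_1, …, D_s} such that φ(D(f)) ≠ 0. -/

import Mathlib

set_option synthInstance.maxHeartbeats 1000000
set_option maxHeartbeats 1000000

open MvPolynomial in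
private lemma aux_coeff_pderiv {σ k : Type*} [CommRing k] [DecidableEq σ]
    (i : σ) (m : σ →₀ ℕ) (G : MvPolynomial σ k) :
    coeff m (pderiv i G) = ((m i + 1 : ℕ) : k) * coeff (m + Finsupp.single i 1) G := by
  induction G using MvPolynomial.induction_on' with
  | add p q hp hq => simp [map_add, hp, hq, mul_add]
  | monomial m' a =>
    rw [pderiv_monomial, coeff_monomial, coeff_monomial]
    rcases eq_or_ne m' (m + Finsupp.single i 1) with h | h
    · subst h
      have h1 : (m + Finsupp.single i 1) - Finsupp.single i 1 = m := by
        ext j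
        simp [Finsupp.tsub_apply, Finsupp.add_apply]
      rw [if_pos h1, if_pos rfl]
      have h2 : (m + Finsupp.single i 1 : σ →₀ ℕ) i = m i + 1 := by
        simp [Finsupp.add_apply, Finsupp.single_eq_same]
      rw [h2, mul_comm]
    · rw [if_neg h, mul_zero]
      by_cases h2 : m' - Finsupp.single i 1 = m
      · have h3 : m' i = 0 := by
          by_contra h3
          apply h
          have hle : Finsupp.single i 1 ≤ m' := Finsupp.single_le_iff.mpr (by omega)
          rw [← h2, tsub_add_cancel_of_le hle]
        rw [if_pos h2, h3, Nat.cast_zero, mul_zero]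
      · rw [if_neg h2]

open MvPolynomial in
private lemma aux_mvzero {s : ℕ} {k : Type*} [Field k] [CharZero k] (c : Fin s → k) :
    ∀ (n : ℕ) (G : MvPolynomial (Fin s) k), G.totalDegree ≤ n →
      (∀ l : List (Fin s),
        aeval c (l.foldr (fun i g => pderiv i g) G) = 0) → G = 0 := by
  have hsumpos : ∀ (m : Fin s →₀ ℕ), m ≠ 0 → 1 ≤ m.sum fun _ e => e := by
    intro m hm
    obtain ⟨i, hi⟩ := Finsupp.ne_iff.mp hm
    simp only [Finsupp.coe_zero, Pi.zero_apply] at hi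
    have h1 : m i ≤ m.sum fun _ e => e :=
      Finset.single_le_sum (f := fun j => m j) (fun j _ => Nat.zero_le _)
        (Finsupp.mem_support_iff.mpr hi)
    omega
  have key : ∀ G : MvPolynomial (Fin s) k, (∀ m : Fin s →₀ ℕ, m ≠ 0 → coeff m G = 0) →
      aeval c G = 0 → G = 0 := by
    intro G hcoeff h0
    have hG : G = C (coeff 0 G) := by
      apply MvPolynomial.ext
      intro m
      rcases eq_or_ne m 0 with rfl | hm
      · simp [coeff_C]
      · rw [hcoeff m hm, coeff_C, if_neg (Ne.symm hm)]
    rw [hG, aeval_C] at h0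
    have : coeff 0 G = 0 := by simpa using h0
    rw [hG, this, map_zero]
  intro n
  induction n with
  | zero =>
    intro G hdeg h
    apply key G _ (by simpa using h [])
    intro m hm
    by_contra hc
    have h1 := MvPolynomial.le_totalDegree (mem_support_iff.mpr hc)
    have h2 := hsumpos m hm
    omega
  | succ n ih =>
    intro G hdeg h
    have hp : ∀ i, pderiv i G = 0 := by
      intro i
      apply ih
      · rw [MvPolynomial.totalDegree]
        apply Finset.sup_le
        intro m hm
        have hc : coeff m (pderiv i G) ≠ 0 := mem_support_iff.mp hm
        have hne : coeff (m + Finsupp.single i 1) G ≠ 0 := by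
          intro h0
          rw [aux_coeff_pderiv, h0, mul_zero] at hc
          exact hc rfl
        have hle : ((m + Finsupp.single i 1).sum fun _ e => e) ≤ n + 1 :=
          le_trans (MvPolynomial.le_totalDegree (mem_support_iff.mpr hne)) hdeg
        have hsum : ((m + Finsupp.single i 1).sum fun _ e => e)
            = (m.sum fun _ e => e) + 1 := by
          rw [Finsupp.sum_add_index (by simp) (by intros; rfl), Finsupp.sum_single_index rfl]
        omega
      · intro l
        have := h (l ++ [i])
        simpa [List.foldr_append] using this
    apply key G _ (by simpa using h [])
    intro m hm
    obtain ⟨i, hi⟩ := Finsupp.ne_iff.mp hm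
    simp only [Finsupp.coe_zero, Pi.zero_apply] at hi
    have hle : Finsupp.single i 1 ≤ m := Finsupp.single_le_iff.mpr (by omega)
    have heq : (m - Finsupp.single i 1) + Finsupp.single i 1 = m := tsub_add_cancel_of_le hle
    have hthis := aux_coeff_pderiv i (m - Finsupp.single i 1) G
    rw [hp i, heq, coeff_zero] at hthis
    have hnz : ((((m - Finsupp.single i 1 : Fin s →₀ ℕ) i + 1 : ℕ)) : k) ≠ 0 :=
      Nat.cast_ne_zero.mpr (by omega)
    exact (mul_eq_zero.mp hthis.symm).resolve_left hnz

private lemma aux_deriv_span {k B : Type*} [CommRing k] [CommRing B] [Algebra k B]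
    (d : Derivation k B B) (S T : Set B)
    (h1 : ∀ g ∈ S, g ∈ Ideal.span T) (h2 : ∀ g ∈ S, d g ∈ Ideal.span T) :
    ∀ x ∈ Ideal.span S, x ∈ Ideal.span T ∧ d x ∈ Ideal.span T := by
  intro x hx
  refine Submodule.span_induction ?_ ?_ ?_ ?_ hx
  · exact fun g hg => ⟨h1 g hg, h2 g hg⟩
  · simp
  · rintro a b _ _ ⟨ha1, ha2⟩ ⟨hb1, hb2⟩
    exact ⟨Ideal.add_mem _ ha1 hb1, by rw [map_add]; exact Ideal.add_mem _ ha2 hb2⟩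
  · rintro r a _ ⟨ha1, ha2⟩
    constructor
    · rw [smul_eq_mul]
      exact Ideal.mul_mem_left _ _ ha1
    · rw [smul_eq_mul, Derivation.leibniz, smul_eq_mul, smul_eq_mul]
      exact Ideal.add_mem _ (Ideal.mul_mem_left _ _ ha2) (Ideal.mul_mem_right _ _ ha1)

private lemma aux_fold_mul {k B : Type*} [CommRing k] [CommRing B] [Algebra k B]
    {s : ℕ} (D : Fin s → Derivation k B B) (b : B) :
    ∀ (l : List (Fin s)) (a : B),
      l.foldr (fun i x => D i x) (a * b) ∈
        Ideal.span ((fun l' : List (Fin s) => l'.foldr (fun i x => D i x) b) ''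
          {l' | l'.Sublist l}) := by
  intro l
  induction l with
  | nil =>
    intro a
    simp only [List.foldr_nil]
    apply Ideal.mul_mem_left
    exact Ideal.subset_span ⟨[], by simp, rfl⟩
  | cons i l ih =>
    intro a
    simp only [List.foldr_cons]
    refine (aux_deriv_span (D i) _ _ ?_ ?_ _ (ih a)).2
    · rintro g ⟨l', hl', rfl⟩
      exact Ideal.subset_span ⟨l', List.Sublist.cons i hl', rfl⟩
    · rintro g ⟨l', hl', rfl⟩
      exact Ideal.subset_span ⟨i :: l', List.Sublist.cons₂ i hl', rfl⟩

private lemma aux_poly {A B : Type*} [CommRing A] [CommRing B] [IsDomain B] [Algebra A B]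
    (f : B) (hf : f ≠ 0) :
    ∀ (n : ℕ) (p : Polynomial A), p.natDegree ≤ n → p ≠ 0 → Polynomial.aeval f p = 0 →
      ∃ q : Polynomial A, q ≠ 0 ∧ q.coeff 0 ≠ 0 ∧ Polynomial.aeval f q = 0 := by
  intro n
  induction n with
  | zero =>
    intro p hdeg hp0 hroot
    by_cases hc : p.coeff 0 = 0
    · exfalso
      apply hp0
      rw [Polynomial.eq_C_of_natDegree_le_zero hdeg, hc, map_zero]
    · exact ⟨p, hp0, hc, hroot⟩
  | succ n ih =>
    intro p hdeg hp0 hroot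
    by_cases hc : p.coeff 0 = 0
    · have hps : Polynomial.X * p.divX = p := by
        have := Polynomial.X_mul_divX_add p
        rw [hc, map_zero, add_zero] at this
        exact this
      have hdx0 : p.divX ≠ 0 := by
        intro h
        apply hp0
        rw [← hps, h, mul_zero]
      have hroot' : Polynomial.aeval f p.divX = 0 := by
        rw [← hps, map_mul, Polynomial.aeval_X] at hroot
        exact (mul_eq_zero.mp hroot).resolve_left hf
      refine ih p.divX ?_ hdx0 hroot'
      have := Polynomial.natDegree_divX_eq_natDegree_tsub_one (p := p)
      omega
    · exact ⟨p, hp0, hc, hroot⟩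

open MvPolynomial in
private lemma aux_D_aeval {k B : Type*} [CommRing k] [CommRing B] [Algebra k B]
    {s : ℕ} (t : Fin s → B) (D : Fin s → Derivation k B B)
    (hD : ∀ i j, D i (t j) = if i = j then 1 else 0) (i : Fin s) (G : MvPolynomial (Fin s) k) :
    D i (aeval t G) = aeval t (pderiv i G) := by
  induction G using MvPolynomial.induction_on with
  | C a =>
    rw [aeval_C, pderiv_C, map_zero]
    exact (D i).map_algebraMap a
  | add p q hp hq => simp [map_add, hp, hq]
  | mul_X p j hp =>
    have e1 : D i (aeval t (p * X j)) = aeval t p * D i (t j) + t j * D i (aeval t p) := by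
      rw [map_mul, aeval_X, Derivation.leibniz, smul_eq_mul, smul_eq_mul]
    have e2 : aeval t (pderiv i (p * X j))
        = aeval t (pderiv i p) * t j + aeval t p * aeval t (pderiv i (X j : MvPolynomial (Fin s) k)) := by
      rw [pderiv_mul, map_add, map_mul, map_mul, aeval_X]
    rw [e1, e2, hp, hD]
    by_cases hij : i = j
    · subst hij
      rw [pderiv_X_self, if_pos rfl, map_one]
      ring
    · rw [pderiv_X_of_ne (Ne.symm hij), if_neg hij, map_zero]
      ring

/-- Finiteness of the valuation `ν_P`: with chart parameters `t 1, …, t s` and dual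
derivations `D 1, …, D s` as in the paper, and a point `P` of the variety given as a
`k`-algebra homomorphism `φ : B → k`, for every nonzero `f ∈ B` some finite composition of
the derivations `D i` applied to `f` has nonzero value at `P`. -/
theorem exists_composition_of_derivations_nonvanishing
    (k B : Type*) [Field k] [CharZero k] [CommRing B] [IsDomain B] [Algebra k B]
    (s : ℕ) (t : Fin s → B)
    (halg : ∀ b : B, IsAlgebraic (Algebra.adjoin k (Set.range t)) b)
    (D : Fin s → Derivation k B B)
    (hD : ∀ i j, D i (t j) = if i = j then 1 else 0)
    (φ : B →ₐ[k] k)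
    (f : B) (hf : f ≠ 0) :
    ∃ l : List (Fin s), φ (l.foldr (fun i b => D i b) f) ≠ 0 := by
  by_contra hcon
  push_neg at hcon
  -- every multiple of f is killed by φ after any word of derivations
  have hmul : ∀ (a : B) (l : List (Fin s)), φ (l.foldr (fun i b => D i b) (a * f)) = 0 := by
    intro a l
    have hmem := aux_fold_mul D f l a
    have hsub : ((fun l' : List (Fin s) => l'.foldr (fun i x => D i x) f) ''
        {l' | l'.Sublist l}) ⊆ (RingHom.ker (φ : B →+* k) : Set B) := by
      rintro g ⟨l', _, rfl⟩
      exact hcon l'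
    exact RingHom.mem_ker.mp ((Ideal.span_le.mpr hsub) hmem)
  -- find an algebraic relation with nonzero constant term
  obtain ⟨p, hp0, hproot⟩ := halg f
  obtain ⟨q, hq0, hqc, hqroot⟩ := aux_poly f hf p.natDegree p le_rfl hp0 hproot
  have hg0ne : (q.coeff 0 : B) ≠ 0 := by
    simpa [ne_eq, ZeroMemClass.coe_eq_zero] using hqc
  have hg0f : ∃ a : B, (q.coeff 0 : B) = a * f := by
    have hq := Polynomial.X_mul_divX_add q
    have h2 : Polynomial.aeval f (Polynomial.X * q.divX + Polynomial.C (q.coeff 0)) = 0 := by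
      rw [hq]; exact hqroot
    rw [map_add, map_mul, Polynomial.aeval_X, Polynomial.aeval_C] at h2
    refine ⟨-(Polynomial.aeval f q.divX), ?_⟩
    have h3 : (algebraMap (Algebra.adjoin k (Set.range t)) B) (q.coeff 0) = (q.coeff 0 : B) := rfl
    rw [h3] at h2
    linear_combination h2
  obtain ⟨a, ha⟩ := hg0f
  have hg0kill : ∀ l : List (Fin s), φ (l.foldr (fun i b => D i b) (q.coeff 0 : B)) = 0 := by
    intro l; rw [ha]; exact hmul a l
  -- write g0 as a polynomial in the t's
  have hg0mem : (q.coeff 0 : B) ∈ Algebra.adjoin k (Set.range t) := (q.coeff 0).2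
  have hrange : (q.coeff 0 : B) ∈ (MvPolynomial.aeval (R := k) t).range := by
    rw [← Algebra.adjoin_range_eq_range_aeval]
    exact hg0mem
  obtain ⟨G, hG⟩ := (AlgHom.mem_range _).mp hrange
  -- transfer to iterated partial derivatives
  have hfold : ∀ (l : List (Fin s)) (H : MvPolynomial (Fin s) k),
      l.foldr (fun i b => D i b) (MvPolynomial.aeval t H)
        = MvPolynomial.aeval t (l.foldr (fun i g => MvPolynomial.pderiv i g) H) := by
    intro l
    induction l with
    | nil => intro H; rfl
    | cons i l ih =>
      intro H
      simp only [List.foldr_cons, ih H]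
      exact aux_D_aeval t D hD i _
  have hzero : ∀ l : List (Fin s),
      MvPolynomial.aeval (fun j => φ (t j))
        (l.foldr (fun i g => MvPolynomial.pderiv i g) G) = 0 := by
    intro l
    have hcal : φ (l.foldr (fun i b => D i b) (q.coeff 0 : B))
        = MvPolynomial.aeval (fun j => φ (t j))
            (l.foldr (fun i g => MvPolynomial.pderiv i g) G) := by
      rw [← hG, hfold]
      exact MvPolynomial.comp_aeval_apply (f := t) φ _
    rw [← hcal]
    exact hg0kill l
  have hGz : G = 0 := aux_mvzero (fun j => φ (t j)) G.totalDegree G le_rfl hzero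
  rw [hGz, map_zero] at hG
  exact hg0ne hG.symm
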